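/- arXiv:1104.1759 — 8 statements merged into one kernel-verified Lean document; each statement's English description precedes it below -/
import Mathlib

section
/- If B is an unbounded (with respect to eventual domination ≤*) family of infinite subsets of ω (each identified with its increasing enumeration function), then for every strictly increasing function f : ω → ω there exists x ∈ B such that x ∩ (f(n), f(n+1)) = ∅ for infinitely many n. -/
/-- Identify an infinite set `x ⊆ ω` with its increasing enumeration `Nat.nth (· ∈ x)`.
If `B` is unbounded with respect to eventual domination, then for every strictly increasing
`f : ℕ → ℕ` there is `x ∈ B` missing the interval `(f n, f (n+1))` for infinitely many `n`. -/
theorem unbounded_family_misses_intervals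
    (B : Set (Set ℕ)) (hB : ∀ x ∈ B, x.Infinite)
    (hunb : ¬ ∃ g : ℕ → ℕ, ∀ x ∈ B,
      ∀ᶠ n in Filter.atTop, Nat.nth (· ∈ x) n ≤ g n)
    (f : ℕ → ℕ) (hf : StrictMono f) :
    ∃ x ∈ B, {n : ℕ | x ∩ Set.Ioo (f n) (f (n + 1)) = ∅}.Infinite := by
  classical
  by_contra hcon
  push_neg at hcon
  apply hunb
  refine ⟨fun m => f (2 * m + 2), fun x hx => ?_⟩
  have hfin : {n : ℕ | x ∩ Set.Ioo (f n) (f (n + 1)) = ∅}.Finite :=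
    hcon x hx
  obtain ⟨N, hN⟩ := hfin.bddAbove
  set p : ℕ → Prop := fun k => k ∈ x with hp
  have hpi : (setOf p).Infinite := hB x hx
  have key : ∀ k, k ≤ Nat.count p (f (N + 1 + k)) := by
    intro k
    induction k with
    | zero => exact Nat.zero_le _
    | succ k ih =>
      have hns : (N + 1 + k) ∉ {n : ℕ | x ∩ Set.Ioo (f n) (f (n + 1)) = ∅} := by
        intro hmem
        have := hN hmem
        omega
      have hne : (x ∩ Set.Ioo (f (N + 1 + k)) (f (N + 1 + k + 1))).Nonempty :=
        Set.nonempty_iff_ne_empty.mpr hns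
      obtain ⟨a, hax, ha1, ha2⟩ := hne
      have h1 : Nat.count p (f (N + 1 + k)) ≤ Nat.count p a :=
        Nat.count_monotone p ha1.le
      have h2 : Nat.count p a + 1 = Nat.count p (a + 1) := by
        rw [Nat.count_succ]
        simp [hp, hax]
      have h3 : Nat.count p (a + 1) ≤ Nat.count p (f (N + 1 + k + 1)) :=
        Nat.count_monotone p ha2
      have heq : N + 1 + (k + 1) = N + 1 + k + 1 := by omega
      rw [heq]
      omega
  rw [Filter.eventually_atTop]
  refine ⟨N, fun m hm => ?_⟩
  have h4 : Nat.nth p m < f (N + 1 + (m + 1)) :=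
    Nat.nth_lt_of_lt_count (lt_of_lt_of_le (Nat.lt_succ_of_le le_rfl) (key (m + 1)))
  have h5 : f (N + 1 + (m + 1)) ≤ f (2 * m + 2) := hf.monotone (by omega)
  exact le_of_lt (lt_of_lt_of_le h4 h5)
end

section
/- Every Alster space is a Hurewicz space. -/
/-- `X` is Alster if every cover of `X` by Gδ sets such that every compact subset
is contained in some member has a countable subcover. -/
def AlsterSpace (X : Type*) [TopologicalSpace X] : Prop :=
  ∀ 𝒰 : Set (Set X), (∀ S ∈ 𝒰, IsGδ S) → ⋃₀ 𝒰 = Set.univ →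
    (∀ K : Set X, IsCompact K → ∃ S ∈ 𝒰, K ⊆ S) →
    ∃ 𝒱 ⊆ 𝒰, 𝒱.Countable ∧ ⋃₀ 𝒱 = Set.univ

/-- `X` is Hurewicz if for every sequence of open covers without finite subcovers there
are finite subfamilies whose unions form a point-cofinite cover. -/
def HurewiczSpace (X : Type*) [TopologicalSpace X] : Prop :=
  ∀ 𝒰 : ℕ → Set (Set X),
    (∀ n, ∀ S ∈ 𝒰 n, IsOpen S) → (∀ n, ⋃₀ 𝒰 n = Set.univ) →
    (∀ n, ¬ ∃ F : Set (Set X), F ⊆ 𝒰 n ∧ F.Finite ∧ ⋃₀ F = Set.univ) →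
    ∃ F : ℕ → Set (Set X), (∀ n, F n ⊆ 𝒰 n ∧ (F n).Finite) ∧
      ∀ x : X, ∀ᶠ n in Filter.atTop, x ∈ ⋃₀ F n

/-- Every Alster space is Hurewicz. -/
theorem alster_implies_hurewicz {X : Type*} [TopologicalSpace X]
    (hX : AlsterSpace X) : HurewiczSpace X := by
  intro 𝒰 hopen hcov hnofin
  rcases isEmpty_or_nonempty X with hE | hNE
  · exact absurd ⟨∅, Set.empty_subset _, Set.finite_empty, by
      rw [Set.sUnion_empty]
      exact (Set.eq_empty_of_isEmpty (Set.univ : Set X)).symm⟩ (hnofin 0)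
  -- choose finite subcovers of each compact set from each cover
  have hch : ∀ (K : Set X), IsCompact K → ∀ n, ∃ F : Set (Set X),
      F ⊆ 𝒰 n ∧ F.Finite ∧ K ⊆ ⋃₀ F := by
    intro K hK n
    obtain ⟨t, hts, htf, htc⟩ := hK.elim_finite_subcover_image
      (fun S hS => hopen n S hS)
      (by rw [← Set.sUnion_eq_biUnion, hcov n]; exact Set.subset_univ K)
    exact ⟨t, hts, htf, by rwa [Set.sUnion_eq_biUnion]⟩
  choose f hf1 hf2 hf3 using hch
  set G : ∀ K : Set X, IsCompact K → Set X :=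
    fun K hK => ⋂ n, ⋃₀ f K hK n with hG
  set 𝒢 : Set (Set X) := {S | ∃ K, ∃ hK : IsCompact K, S = G K hK} with h𝒢
  have hKsub : ∀ (K : Set X) (hK : IsCompact K), K ⊆ G K hK := by
    intro K hK
    exact Set.subset_iInter fun n => hf3 K hK n
  have hGδ : ∀ S ∈ 𝒢, IsGδ S := by
    rintro S ⟨K, hK, rfl⟩
    exact .iInter_of_isOpen fun n =>
      isOpen_sUnion fun t ht => hopen n t (hf1 K hK n ht)
  have hGcov : ⋃₀ 𝒢 = Set.univ := by
    apply Set.eq_univ_of_forall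
    intro x
    exact ⟨G {x} isCompact_singleton, ⟨{x}, isCompact_singleton, rfl⟩,
      hKsub {x} isCompact_singleton rfl⟩
  have hGcomp : ∀ K : Set X, IsCompact K → ∃ S ∈ 𝒢, K ⊆ S := by
    intro K hK
    exact ⟨G K hK, ⟨K, hK, rfl⟩, hKsub K hK⟩
  obtain ⟨𝒱, h𝒱sub, h𝒱c, h𝒱cov⟩ := hX 𝒢 hGδ hGcov hGcomp
  have h𝒱ne : 𝒱.Nonempty := by
    obtain ⟨x⟩ := hNE
    have hx : x ∈ ⋃₀ 𝒱 := h𝒱cov ▸ Set.mem_univ x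
    obtain ⟨S, hS, -⟩ := hx
    exact ⟨S, hS⟩
  obtain ⟨e, he⟩ := h𝒱c.exists_eq_range h𝒱ne
  have hem : ∀ m, ∃ K, ∃ hK : IsCompact K, e m = G K hK := by
    intro m
    exact h𝒱sub (he ▸ Set.mem_range_self m)
  choose K hK hKe using hem
  refine ⟨fun n => ⋃ m ∈ Finset.range (n + 1), f (K m) (hK m) n, ?_, ?_⟩
  · intro n
    constructor
    · intro S hS
      simp only [Set.mem_iUnion] at hS
      obtain ⟨m, -, hS⟩ := hS
      exact hf1 (K m) (hK m) n hS
    · exact Set.Finite.biUnion (Finset.range (n + 1)).finite_toSet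
        fun m _ => hf2 (K m) (hK m) n
  · intro x
    have hx : x ∈ ⋃₀ 𝒱 := h𝒱cov ▸ Set.mem_univ x
    rw [he] at hx
    obtain ⟨S, ⟨m, rfl⟩, hxS⟩ := hx
    rw [hKe m] at hxS
    filter_upwards [Filter.eventually_ge_atTop m] with n hn
    have hx' : x ∈ ⋃₀ f (K m) (hK m) n := Set.mem_iInter.mp hxS n
    obtain ⟨t, ht, hxt⟩ := hx'
    exact ⟨t, Set.mem_biUnion (Finset.mem_range.mpr (Nat.lt_succ_of_le hn)) ht, hxt⟩
end

section
/- Every γ-space is a Hurewicz space. -/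
/-- `𝒰` is an ω-cover of `X`: `X ∉ 𝒰`, all members open, and every finite subset of `X`
is contained in some member. -/
def IsOmegaCover {X : Type*} [TopologicalSpace X] (𝒰 : Set (Set X)) : Prop :=
  Set.univ ∉ 𝒰 ∧ (∀ U ∈ 𝒰, IsOpen U) ∧
    ∀ F : Set X, F.Finite → ∃ U ∈ 𝒰, F ⊆ U

/-- `X` is a γ-space: every ω-cover contains a point-cofinite subfamily `{Uₙ}`. -/
def GammaSpace (X : Type*) [TopologicalSpace X] : Prop :=
  ∀ 𝒰 : Set (Set X), IsOmegaCover 𝒰 →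
    ∃ U : ℕ → Set X, (∀ n, U n ∈ 𝒰) ∧
      ∀ x : X, ∀ᶠ n in Filter.atTop, x ∈ U n

/-- Every γ-space is Hurewicz. -/
theorem gammaSpace_implies_hurewicz {X : Type*} [TopologicalSpace X]
    (hX : GammaSpace X) : HurewiczSpace X := by
  intro 𝒰 hopen hcov hnofin
  classical
  -- every point is in some member of each cover
  have hmem : ∀ (n : ℕ) (x : X), ∃ U ∈ 𝒰 n, x ∈ U := by
    intro n x
    have h := hcov n
    rw [Set.sUnion_eq_univ_iff] at h
    exact h x
  -- every finite set is covered by a finite subfamily of each cover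
  have hfin : ∀ (n : ℕ) (F : Set X), F.Finite → ∃ G, G ⊆ 𝒰 n ∧ G.Finite ∧ F ⊆ ⋃₀ G := by
    intro n F hF
    choose U hU hxU using hmem n
    exact ⟨U '' F, by rintro _ ⟨x, _, rfl⟩; exact hU x, hF.image _,
      fun x hx => ⟨U x, ⟨x, hx, rfl⟩, hxU x⟩⟩
  -- the ω-cover of finite unions from 𝒰 0
  set W0 : Set (Set X) := {S | ∃ G, G ⊆ 𝒰 0 ∧ G.Finite ∧ S = ⋃₀ G} with hW0def
  have hne0 : ∀ S ∈ W0, S ≠ Set.univ := by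
    rintro S ⟨G, hG1, hG2, rfl⟩ h
    exact hnofin 0 ⟨G, hG1, hG2, h⟩
  have hW0 : IsOmegaCover W0 := by
    refine ⟨fun h => hne0 _ h rfl, ?_, ?_⟩
    · rintro S ⟨G, hG1, hG2, rfl⟩
      exact isOpen_sUnion fun U hU => hopen 0 U (hG1 hU)
    · intro F hF
      obtain ⟨G, hG1, hG2, hG3⟩ := hfin 0 F hF
      exact ⟨⋃₀ G, ⟨G, hG1, hG2, rfl⟩, hG3⟩
  obtain ⟨R0, hR0mem, hR0cof⟩ := hX W0 hW0
  simp only [hW0def, Set.mem_setOf_eq] at hR0mem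
  choose G0 hG0sub hG0fin hG0eq using hR0mem
  -- monotone version of R0
  set R : ℕ → Set X := fun n => ⋃₀ (⋃ j ∈ Finset.range (n+1), G0 j) with hRdef
  have hRW0 : ∀ n, R n ∈ W0 := by
    intro n
    refine ⟨⋃ j ∈ Finset.range (n+1), G0 j, ?_, ?_, rfl⟩
    · intro U hU
      simp only [Set.mem_iUnion] at hU
      obtain ⟨j, _, hj⟩ := hU
      exact hG0sub j hj
    · exact Set.Finite.biUnion (Finset.range (n+1)).finite_toSet (fun j _ => hG0fin j)
  have hRne : ∀ n, R n ≠ Set.univ := fun n => hne0 _ (hRW0 n)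
  have hRopen : ∀ n, IsOpen (R n) := fun n => hW0.2.1 _ (hRW0 n)
  have hR0R : ∀ n, R0 n ⊆ R n := by
    intro n x hx
    rw [hG0eq n] at hx
    obtain ⟨U, hU, hxU⟩ := hx
    exact ⟨U, Set.mem_iUnion.2 ⟨n, Set.mem_iUnion.2 ⟨Finset.mem_range.2 (Nat.lt_succ_self n), hU⟩⟩, hxU⟩
  have hRmono : Monotone R := by
    intro a b hab x hx
    obtain ⟨U, hU, hxU⟩ := hx
    simp only [Set.mem_iUnion] at hU
    obtain ⟨j, hj, hjU⟩ := hU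
    refine ⟨U, ?_, hxU⟩
    simp only [Set.mem_iUnion]
    exact ⟨j, Finset.mem_range.2 (lt_of_lt_of_le (Finset.mem_range.1 hj) (by omega)), hjU⟩
  have hRcof : ∀ x : X, ∀ᶠ n in Filter.atTop, x ∈ R n :=
    fun x => (hR0cof x).mono fun n hn => hR0R n hn
  -- the main ω-cover, with levels tagged by R
  set W : Set (Set X) := {S | ∃ n, ∃ G : ℕ → Set (Set X),
      (∀ i, G i ⊆ 𝒰 i ∧ (G i).Finite) ∧
      S = R n ∩ ⋂ i ∈ Finset.range (n+1), ⋃₀ G i} with hWdef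
  have hW : IsOmegaCover W := by
    refine ⟨?_, ?_, ?_⟩
    · rintro ⟨n, G, hG, heq⟩
      exact hRne n (Set.eq_univ_of_univ_subset (by rw [heq]; exact Set.inter_subset_left))
    · rintro S ⟨n, G, hG, rfl⟩
      refine (hRopen n).inter (isOpen_biInter_finset fun i _ => ?_)
      exact isOpen_sUnion fun U hU => hopen i U ((hG i).1 hU)
    · intro F hF
      have hev : ∀ᶠ n in Filter.atTop, ∀ x ∈ F, x ∈ R n :=
        (Filter.eventually_all_finite hF).2 fun x _ => hRcof x
      obtain ⟨n, hn⟩ := hev.exists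
      have hch : ∀ i : ℕ, ∃ G, G ⊆ 𝒰 i ∧ G.Finite ∧ F ⊆ ⋃₀ G := fun i => hfin i F hF
      choose G hGs hGf hGc using hch
      refine ⟨R n ∩ ⋂ i ∈ Finset.range (n+1), ⋃₀ G i,
        ⟨n, G, fun i => ⟨hGs i, hGf i⟩, rfl⟩, ?_⟩
      intro x hx
      exact ⟨hn x hx, Set.mem_biInter fun i _ => hGc i hx⟩
  obtain ⟨S, hSmem, hScof⟩ := hX W hW
  simp only [hWdef, Set.mem_setOf_eq] at hSmem
  choose nt G hG hSeq using hSmem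
  -- levels are unbounded
  have key : ∀ m : ℕ, ∃ t, m ≤ t ∧ m ≤ nt t := by
    by_contra h
    push_neg at h
    obtain ⟨m, hm⟩ := h
    refine hRne m (Set.eq_univ_iff_forall.2 fun x => ?_)
    obtain ⟨K, hK⟩ := Filter.eventually_atTop.mp (hScof x)
    have hx : x ∈ S (max m K) := hK _ (le_max_right _ _)
    rw [hSeq (max m K)] at hx
    exact hRmono (le_of_lt (hm _ (le_max_left _ _))) hx.1
  choose t ht1 ht2 using key
  refine ⟨fun n => G (t n) n, fun n => hG (t n) n, ?_⟩
  intro x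
  obtain ⟨K, hK⟩ := Filter.eventually_atTop.mp (hScof x)
  rw [Filter.eventually_atTop]
  refine ⟨K, fun n hn => ?_⟩
  have hx : x ∈ S (t n) := hK _ (le_trans hn (ht1 n))
  rw [hSeq (t n)] at hx
  have := hx.2
  rw [Set.mem_iInter₂] at this
  exact this n (Finset.mem_range.2 (Nat.lt_succ_of_le (ht2 n)))
end

section
/- If f : X → Y is a perfect (proper, closed, continuous surjection with compact fibers) map, X × Z is a topological product, and X × Z → Y × Z is the induced map f × id, then if X × Z is Lindelöf, so is Y × Z. Consequently, if X is productively Lindelöf and f : X → Y is a continuous surjection, then Y is productively Lindelöf. -/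
universe u

/-- `X` is productively Lindelöf: its product with every Lindelöf space is Lindelöf. -/
def ProductivelyLindelof (X : Type u) [TopologicalSpace X] : Prop :=
  ∀ (Z : Type u) [TopologicalSpace Z], LindelofSpace Z → LindelofSpace (X × Z)

lemma lindelof_of_image {X Y : Type u} [TopologicalSpace X] [TopologicalSpace Y]
    (f : X → Y) (hc : Continuous f) (hs : Function.Surjective f)
    (h : LindelofSpace X) : LindelofSpace Y := by
  constructor
  have := h.isLindelof_univ.image hc
  rwa [Set.image_univ, Set.range_eq_univ.mpr hs] at this

/-- If `f : X → Y` is a perfect map then `X × Z` Lindelöf implies `Y × Z` Lindelöf;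
consequently continuous surjective images of productively Lindelöf spaces are
productively Lindelöf. -/
theorem perfect_image_lindelof_product :
    (∀ (X Y Z : Type u) [TopologicalSpace X] [TopologicalSpace Y] [TopologicalSpace Z]
      (f : X → Y), Continuous f → Function.Surjective f → IsClosedMap f →
      (∀ y : Y, IsCompact (f ⁻¹' {y})) →
      LindelofSpace (X × Z) → LindelofSpace (Y × Z)) ∧
    (∀ (X Y : Type u) [TopologicalSpace X] [TopologicalSpace Y] (f : X → Y),
      Continuous f → Function.Surjective f →
      ProductivelyLindelof X → ProductivelyLindelof Y) := by
  constructor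
  · intro X Y Z _ _ _ f hc hs _ _ h
    exact lindelof_of_image (Prod.map f id) (hc.prodMap continuous_id)
      (hs.prodMap Function.surjective_id) h
  · intro X Y _ _ f hc hs hX Z _ hZ
    exact lindelof_of_image (Prod.map f id) (hc.prodMap continuous_id)
      (hs.prodMap Function.surjective_id) (hX Z hZ)
end

section
/- Let the Michael topology on P(ω) be the topology refining the Cantor topology (via characteristic functions) by declaring every infinite subset of ω isolated. Suppose [ω]^{<ω} ⊆ Y ⊆ P(ω), Y is countable, and 𝒰 is a family of open subsets of P(ω) (Michael topology) such that each finite subset of Y is included in some member of 𝒰. Then there exist m₀ < m₁ < ⋯ in ω and U₀, U₁, ⋯ ∈ 𝒰 (not necessarily distinct) such that: (1) each y ∈ Y belongs to Uₙ for all but finitely many n; and (2) for every x ⊆ ω, if x ∩ (mₙ, mₙ₊₁) = ∅ then x ∈ Uₙ. -/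
/-- The Cantor topology on `P(ω)`: induced, via characteristic functions, from the
product of discrete topologies on `ℕ → Prop`. -/
def cantorTop : TopologicalSpace (Set ℕ) :=
  TopologicalSpace.induced (fun x : Set ℕ => fun n : ℕ => n ∈ x)
    (Pi.topologicalSpace (t₂ := fun _ => ⊥))

/-- The Michael topology on `P(ω)`: the Cantor topology refined by declaring every
infinite subset of `ω` isolated. -/
def michaelTop : TopologicalSpace (Set ℕ) :=
  TopologicalSpace.generateFrom
    ({S | cantorTop.IsOpen S} ∪ {S | ∃ x : Set ℕ, x.Infinite ∧ S = {x}})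

/-- The basic Cantor-clopen neighborhood: sets agreeing with `a` below `k`. -/
def michaelBasic (a : Set ℕ) (k : ℕ) : Set (Set ℕ) := {z | ∀ i < k, (i ∈ z ↔ i ∈ a)}

lemma michaelBasic_anti {a : Set ℕ} {k k' : ℕ} (h : k ≤ k') :
    michaelBasic a k' ⊆ michaelBasic a k := fun _ hz i hi => hz i (lt_of_lt_of_le hi h)

lemma cantor_nbhd {U : Set (Set ℕ)} (hU : cantorTop.IsOpen U) {a : Set ℕ} (ha : a ∈ U) :
    ∃ k, michaelBasic a k ⊆ U := by
  letI tP : TopologicalSpace Prop := ⊥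
  haveI : DiscreteTopology Prop := ⟨rfl⟩
  obtain ⟨V, hV, rfl⟩ := hU
  set f : Set ℕ → ℕ → Prop := fun x n => n ∈ x with hf
  have hmem : V ∈ nhds (f a) := hV.mem_nhds ha
  rw [nhds_pi] at hmem
  obtain ⟨I, hIfin, t, ht, hsub⟩ := Filter.mem_pi.mp hmem
  obtain ⟨k, hk⟩ := hIfin.bddAbove
  refine ⟨k + 1, fun z hz => hsub ?_⟩
  intro i hi
  have hik : i < k + 1 := Nat.lt_succ_of_le (hk hi)
  have heq : f z i = f a i := propext (hz i hik)
  show f z i ∈ t i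
  rw [heq]
  have := ht i
  rwa [nhds_discrete, Filter.mem_pure] at this

lemma michael_nbhd {U : Set (Set ℕ)} (hU : michaelTop.IsOpen U) :
    ∀ a ∈ U, a.Finite → ∃ k, michaelBasic a k ⊆ U := by
  have hU' : TopologicalSpace.GenerateOpen
      ({S | cantorTop.IsOpen S} ∪ {S | ∃ x : Set ℕ, x.Infinite ∧ S = {x}}) U := hU
  clear hU
  induction hU' with
  | basic s hs =>
    intro a ha hafin
    rcases hs with hs | ⟨x, hxinf, rfl⟩
    · exact cantor_nbhd hs ha
    · rw [Set.mem_singleton_iff] at ha; subst ha; exact absurd hafin hxinf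
  | univ => exact fun a _ _ => ⟨0, fun z _ => trivial⟩
  | inter s t _ _ ihs iht =>
    intro a ha hafin
    obtain ⟨ks, hks⟩ := ihs a ha.1 hafin
    obtain ⟨kt, hkt⟩ := iht a ha.2 hafin
    exact ⟨max ks kt, fun z hz =>
      ⟨hks (michaelBasic_anti (le_max_left _ _) hz),
       hkt (michaelBasic_anti (le_max_right _ _) hz)⟩⟩
  | sUnion S hS ih =>
    intro a ha hafin
    obtain ⟨t, htS, hat⟩ := ha
    obtain ⟨k, hk⟩ := ih t htS a hat hafin
    exact ⟨k, fun z hz => ⟨t, htS, hk hz⟩⟩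

/-- Galvin–Miller type lemma for the Michael topology. -/
theorem galvin_miller_michael
    (Y : Set (Set ℕ)) (hfin : {s : Set ℕ | s.Finite} ⊆ Y) (hY : Y.Countable)
    (𝒰 : Set (Set (Set ℕ))) (hop : ∀ U ∈ 𝒰, michaelTop.IsOpen U)
    (hcov : ∀ F : Set (Set ℕ), F ⊆ Y → F.Finite → ∃ U ∈ 𝒰, F ⊆ U) :
    ∃ m : ℕ → ℕ, StrictMono m ∧
      ∃ U : ℕ → Set (Set ℕ), (∀ n, U n ∈ 𝒰) ∧
        (∀ y ∈ Y, ∀ᶠ n in Filter.atTop, y ∈ U n) ∧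
        (∀ x : Set ℕ, ∀ n : ℕ, x ∩ Set.Ioo (m n) (m (n + 1)) = ∅ → x ∈ U n) := by
  classical
  obtain ⟨e, hYe⟩ := Set.Countable.exists_eq_range hY ⟨∅, hfin Set.finite_empty⟩
  -- Step 1: for every `n, m` choose an open `V n m ∈ 𝒰` containing `e 0, …, e n` and
  -- all subsets of `[0, m]`.
  have hU_ex : ∀ n m : ℕ, ∃ U ∈ 𝒰,
      (∀ i ≤ n, e i ∈ U) ∧ ∀ a : Set ℕ, a ⊆ Set.Iic m → a ∈ U := by
    intro n m
    have hFY : (e '' Set.Iic n) ∪ {a | a ⊆ Set.Iic m} ⊆ Y := by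
      rintro x (⟨i, _, rfl⟩ | hx)
      · rw [hYe]; exact ⟨i, rfl⟩
      · exact hfin ((Set.finite_Iic m).subset hx)
    have hFfin : ((e '' Set.Iic n) ∪ {a | a ⊆ Set.Iic m}).Finite :=
      ((Set.finite_Iic n).image e).union ((Set.finite_Iic m).finite_subsets)
    obtain ⟨U, hU𝒰, hFU⟩ := hcov _ hFY hFfin
    exact ⟨U, hU𝒰, fun i hi => hFU (Or.inl ⟨i, hi, rfl⟩), fun a ha => hFU (Or.inr ha)⟩
  choose V hV𝒰 hVe hVa using hU_ex
  -- Step 2: for every `n, m` choose `M' n m > m` such that every basic neighborhood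
  -- `michaelBasic a (M' n m)` with `a ⊆ [0, m]` is contained in `V n m`.
  have hm_ex : ∀ n m : ℕ, ∃ m', m < m' ∧
      ∀ a : Set ℕ, a ⊆ Set.Iic m → michaelBasic a m' ⊆ V n m := by
    intro n m
    have hS : ({a : Set ℕ | a ⊆ Set.Iic m}).Finite := (Set.finite_Iic m).finite_subsets
    have h1 : ∀ a : Set ℕ, a ⊆ Set.Iic m → ∃ k, michaelBasic a k ⊆ V n m := fun a ha =>
      michael_nbhd (hop _ (hV𝒰 n m)) a (hVa n m a ha) ((Set.finite_Iic m).subset ha)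
    choose k hk using h1
    refine ⟨(hS.toFinset.sup fun a => if h : a ⊆ Set.Iic m then k a h else 0) + m + 1,
      by omega, fun a ha => ?_⟩
    refine subset_trans (michaelBasic_anti ?_) (hk a ha)
    have hmem : a ∈ hS.toFinset := hS.mem_toFinset.mpr ha
    calc k a ha = (if h : a ⊆ Set.Iic m then k a h else 0) := (dif_pos ha).symm
      _ ≤ hS.toFinset.sup (fun a => if h : a ⊆ Set.Iic m then k a h else 0) :=
          Finset.le_sup (f := fun a => if h : a ⊆ Set.Iic m then k a h else 0) hmem
      _ ≤ _ := by omega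
  choose M' hM'lt hM'basic using hm_ex
  -- the recursive sequence of indices
  let M : ℕ → ℕ := fun n => Nat.rec 0 (fun j ih => M' j ih) n
  have hMsucc : ∀ n, M (n + 1) = M' n (M n) := fun n => rfl
  refine ⟨M, strictMono_nat_of_lt_succ fun n => (hMsucc n) ▸ hM'lt n (M n),
    fun n => V n (M n), fun n => hV𝒰 n (M n), ?_, ?_⟩
  · intro y hy
    rw [hYe] at hy
    obtain ⟨i, rfl⟩ := hy
    exact Filter.eventually_atTop.mpr ⟨i, fun n hn => hVe n (M n) i hn⟩
  · intro x n hx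
    have hsub : x ∩ Set.Iic (M n) ⊆ Set.Iic (M n) := Set.inter_subset_right
    apply hM'basic n (M n) _ hsub
    intro i hi
    rcases le_or_gt i (M n) with him | him
    · simp [Set.mem_inter_iff, Set.mem_Iic, him]
    · have hix : i ∉ x := fun h =>
        Set.eq_empty_iff_forall_notMem.mp hx i ⟨h, him, hi⟩
      simp [Set.mem_inter_iff, Set.mem_Iic, hix, not_le.mpr him]
end

section
/- Let X ⊆ P(ω) (with the Michael topology) consist of the finite subsets of ω together with an uncountable ⊆*-decreasing family {x_α : α < ω₁} of infinite subsets of ω. Then the set {(x_α, x_α) : α < ω₁} is closed and discrete in the product X × [ω]^ω, where [ω]^ω carries the Cantor (subspace) topology. In particular, if ω₁ is uncountable this product is not Lindelöf. -/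
open Cardinal

/-- The index set `ω₁`: ordinals below the first uncountable ordinal. -/
def Omega1 : Type 1 := {α : Ordinal.{0} // α < (Cardinal.aleph 1).ord}

noncomputable instance : LinearOrder Omega1 := Subtype.instLinearOrder _

/-- `X = [ω]^{<ω} ∪ {x_α : α < ω₁}`, as a subspace of `P(ω)` with the Michael topology. -/
def MichaelX (x : Omega1 → Set ℕ) : Type :=
  {s : Set ℕ // s.Finite ∨ s ∈ Set.range x}

instance (x : Omega1 → Set ℕ) : TopologicalSpace (MichaelX x) :=
  michaelTop.induced Subtype.val

/-- `[ω]^ω` with the Cantor subspace topology (a copy of the irrationals). -/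
def InfSets : Type := {s : Set ℕ // s.Infinite}

instance : TopologicalSpace InfSets := cantorTop.induced Subtype.val

/-- Basic clopen sets of the Cantor topology. -/
lemma cantor_basic (n : ℕ) (s : Set ℕ) :
    cantorTop.IsOpen {u : Set ℕ | n ∈ u ↔ n ∈ s} := by
  letI : TopologicalSpace Prop := ⊥
  haveI : DiscreteTopology Prop := ⟨rfl⟩
  refine ⟨(fun g : ℕ → Prop => g n) ⁻¹' {p | p ↔ n ∈ s}, ?_, rfl⟩
  exact (continuous_apply n).isOpen_preimage _ (isOpen_discrete _)

/-- The Michael topology refines the Cantor topology. -/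
lemma michael_of_cantor {S : Set (Set ℕ)} (h : cantorTop.IsOpen S) :
    michaelTop.IsOpen S :=
  TopologicalSpace.GenerateOpen.basic S (Or.inl h)

/-- Infinite sets are isolated in the Michael topology. -/
lemma michael_singleton {s : Set ℕ} (h : s.Infinite) :
    michaelTop.IsOpen {s} :=
  TopologicalSpace.GenerateOpen.basic _ (Or.inr ⟨s, h, rfl⟩)

lemma omega1_uncountable : ¬ Countable Omega1 := by
  intro h
  have h1 : #Omega1 = Cardinal.lift.{1,0} (aleph 1) := by
    have := Ordinal.mk_Iio_ordinal (aleph 1).ord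
    rw [Cardinal.card_ord] at this
    exact this
  have h2 : (#Omega1) ≤ (ℵ₀ : Cardinal.{1}) := Cardinal.mk_le_aleph0
  rw [h1, ← Cardinal.lift_aleph0.{1,0}, Cardinal.lift_le] at h2
  exact absurd h2 (not_le.2 Cardinal.aleph0_lt_aleph_one)

/-- For a `⊆*`-decreasing ω₁-family of infinite subsets of `ω`, the diagonal set
`{(x_α, x_α)}` is closed and discrete in `X × [ω]^ω`; in particular this product
is not Lindelöf. -/
theorem michael_diagonal_closed_discrete (x : Omega1 → Set ℕ)
    (hinf : ∀ α, (x α).Infinite) (hinj : Function.Injective x)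
    (hdec : ∀ α β : Omega1, α < β → (x β \ x α).Finite) :
    IsClosed {p : MichaelX x × InfSets | ∃ α, p.1.val = x α ∧ p.2.val = x α} ∧
    (∀ p ∈ {p : MichaelX x × InfSets | ∃ α, p.1.val = x α ∧ p.2.val = x α},
      ∃ U : Set (MichaelX x × InfSets), IsOpen U ∧
        U ∩ {p : MichaelX x × InfSets | ∃ α, p.1.val = x α ∧ p.2.val = x α} = {p}) ∧
    ¬ LindelofSpace (MichaelX x × InfSets) := by
  set D : Set (MichaelX x × InfSets) :=
    {p : MichaelX x × InfSets | ∃ α, p.1.val = x α ∧ p.2.val = x α} with hD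
  -- Any point outside D has distinct coordinates.
  have hne : ∀ p : MichaelX x × InfSets, p ∉ D → p.1.val ≠ p.2.val := by
    rintro ⟨s, t⟩ hp heq
    rcases s.property with hfin | ⟨α, hα⟩
    · exact absurd (heq ▸ t.property) (Set.not_infinite.2 hfin)
    · exact hp ⟨α, hα.symm, heq ▸ hα.symm⟩
  -- Closedness.
  have hclosed : IsClosed D := by
    rw [← isOpen_compl_iff, isOpen_iff_forall_mem_open]
    rintro ⟨s, t⟩ hp
    have hst : s.val ≠ t.val := hne _ hp
    obtain ⟨n, hn⟩ : ∃ n, ¬ (n ∈ s.val ↔ n ∈ t.val) := by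
      by_contra h
      push_neg at h
      exact hst (Set.ext h)
    refine ⟨(Subtype.val ⁻¹' {u | n ∈ u ↔ n ∈ s.val}) ×ˢ
        (Subtype.val ⁻¹' {u | n ∈ u ↔ n ∈ t.val}), ?_, ?_, ?_⟩
    · rintro ⟨u, v⟩ ⟨hu, hv⟩ ⟨α, huα, hvα⟩
      have h1 : (n ∈ x α ↔ n ∈ s.val) := huα ▸ hu
      have h2 : (n ∈ x α ↔ n ∈ t.val) := hvα ▸ hv
      exact hn (h1.symm.trans h2)
    · exact @IsOpen.prod (MichaelX x) InfSets _ _ _ _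
        ⟨_, michael_of_cantor (cantor_basic n s.val), rfl⟩ ⟨_, cantor_basic n t.val, rfl⟩
    · exact ⟨Iff.rfl, Iff.rfl⟩
  -- Discreteness: the canonical isolating neighbourhood of each diagonal point.
  have hdisc : ∀ p ∈ D, ∃ U : Set (MichaelX x × InfSets), IsOpen U ∧ U ∩ D = {p} := by
    rintro ⟨s, t⟩ ⟨α, hsα, htα⟩
    refine ⟨(Subtype.val ⁻¹' {x α}) ×ˢ (Set.univ : Set InfSets), ?_, ?_⟩
    · exact @IsOpen.prod (MichaelX x) InfSets _ _ _ _
        ⟨_, michael_singleton (hinf α), rfl⟩ isOpen_univ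
    · ext q
      simp only [Set.mem_inter_iff, Set.mem_prod, Set.mem_preimage, Set.mem_singleton_iff,
        Set.mem_setOf_eq, Set.mem_univ, and_true, hD]
      constructor
      · rintro ⟨hu, β, huβ, hvβ⟩
        have hu : q.1.val = x α := (Set.mem_prod.1 hu).1
        have hβα : β = α := hinj (huβ.symm.trans hu)
        refine Prod.ext_iff.2 ⟨Subtype.ext (hu.trans hsα.symm), Subtype.ext ?_⟩
        rw [hvβ, hβα, ← htα]
      · rintro rfl
        exact ⟨Set.mem_prod.2 ⟨hsα, trivial⟩, α, hsα, htα⟩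
  refine ⟨hclosed, hdisc, ?_⟩
  -- Non-Lindelöfness.
  intro hL
  -- points of the diagonal
  set p : Omega1 → MichaelX x × InfSets :=
    fun α => (⟨x α, Or.inr ⟨α, rfl⟩⟩, ⟨x α, hinf α⟩) with hp
  have hpD : ∀ α, p α ∈ D := fun α => ⟨α, rfl, rfl⟩
  choose U hUopen hUeq using fun α => hdisc (p α) (hpD α)
  have hDL : IsLindelof D := hclosed.isLindelof
  obtain ⟨T, hTc, hTcov⟩ := hDL.elim_countable_subcover U hUopen
    (fun q hq => by
      obtain ⟨α, h1, h2⟩ := hq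
      have hq' : q = p α := Prod.ext_iff.2 ⟨Subtype.ext h1, Subtype.ext h2⟩
      have hm : p α ∈ U α ∩ D := by rw [hUeq α]; rfl
      exact Set.mem_iUnion.2 ⟨α, hq' ▸ hm.1⟩)
  have hall : ∀ α : Omega1, α ∈ T := by
    intro α
    have hmem : p α ∈ ⋃ β ∈ T, U β := hTcov (hpD α)
    obtain ⟨β, hβT, hβ⟩ := Set.mem_iUnion₂.1 hmem
    have hmem2 : p α ∈ U β ∩ D := ⟨hβ, hpD α⟩
    rw [hUeq β] at hmem2
    have hpab : p α = p β := hmem2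
    have hx : x α = x β := congrArg (fun q : MichaelX x × InfSets => q.1.val) hpab
    rwa [hinj hx]
  have : (Set.univ : Set Omega1).Countable := hTc.mono fun a _ => hall a
  exact omega1_uncountable (Set.countable_univ_iff.1 this)
end

section
/- Assume b = ℵ₁ (the minimal cardinality of an unbounded family in ω^ω under ≤* is ℵ₁). Then there is an unbounded family {x_α : α < ω₁} of infinite subsets of ω such that x_β ⊆* x_α whenever α < β < ω₁. -/
open Cardinal

/-- A family of functions is unbounded if no `g` eventually dominates all its members. -/
def UnboundedFamily (B : Set (ℕ → ℕ)) : Prop :=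
  ¬ ∃ g : ℕ → ℕ, ∀ f ∈ B, ∀ᶠ n in Filter.atTop, f n ≤ g n

/- ### Auxiliary lemmas -/

lemma nth_range_strictMono {a : ℕ → ℕ} (ha : StrictMono a) (n : ℕ) :
    Nat.nth (· ∈ Set.range a) n = a n := by
  classical
  have hmem : (fun m => m ∈ Set.range a) (a n) := ⟨n, rfl⟩
  have hcount : Nat.count (fun m => m ∈ Set.range a) (a n) = n := by
    rw [Nat.count_eq_card_filter_range]
    have : (Finset.range (a n)).filter (fun m => m ∈ Set.range a)
        = (Finset.range n).image a := by
      ext m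
      simp only [Finset.mem_filter, Finset.mem_range, Finset.mem_image, Set.mem_range]
      constructor
      · rintro ⟨hm, k, rfl⟩
        exact ⟨k, ha.lt_iff_lt.mp hm, rfl⟩
      · rintro ⟨k, hk, rfl⟩
        exact ⟨ha hk, k, rfl⟩
    rw [this, Finset.card_image_of_injective _ ha.injective, Finset.card_range]
  have h := Nat.nth_count hmem
  rw [hcount] at h
  exact h

/-- Choose a strictly monotone sequence threading through a decreasing sequence of
infinite sets, dominating `f`. -/
lemma exists_thread {t : ℕ → Set ℕ} (ht : ∀ n, (t n).Infinite)
    (hmono : ∀ n, t (n + 1) ⊆ t n) (f : ℕ → ℕ) :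
    ∃ a : ℕ → ℕ, StrictMono a ∧ ∀ n, a n ∈ t n ∧ f n ≤ a n := by
  choose next hnextmem hnextgt using fun n (m : ℕ) => (ht n).exists_gt m
  let a : ℕ → ℕ := fun n =>
    Nat.rec (next 0 (f 0)) (fun k prev => next (k + 1) (max prev (f (k + 1)))) n
  have ha0 : a 0 = next 0 (f 0) := rfl
  have haS : ∀ k, a (k + 1) = next (k + 1) (max (a k) (f (k + 1))) := fun k => rfl
  have hstep : ∀ k, a k < a (k + 1) := by
    intro k
    have := hnextgt (k + 1) (max (a k) (f (k + 1)))
    rw [← haS k] at this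
    exact lt_of_le_of_lt (le_max_left _ _) this
  refine ⟨a, strictMono_nat_of_lt_succ hstep, ?_⟩
  intro n
  cases n with
  | zero =>
    refine ⟨by rw [ha0]; exact hnextmem 0 (f 0), (hnextgt 0 (f 0)).le⟩
  | succ k =>
    constructor
    · rw [haS k]; exact hnextmem (k + 1) _
    · have := hnextgt (k + 1) (max (a k) (f (k + 1)))
      rw [← haS k] at this
      exact le_trans (le_max_right _ _) this.le

/-- Pseudo-intersection with domination: the key combinatorial lemma. -/
lemma key_exists {ι : Type*} [LinearOrder ι] [Countable ι]
    (F : ι → Set ℕ) (hinf : ∀ i, (F i).Infinite)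
    (hchain : ∀ i j, i < j → (F j \ F i).Finite) (f : ℕ → ℕ) :
    ∃ y : Set ℕ, y.Infinite ∧ (∀ i, (y \ F i).Finite) ∧
      ∀ n, f n ≤ Nat.nth (· ∈ y) n := by
  rcases isEmpty_or_nonempty ι with hE | hN
  · obtain ⟨a, ha, haspec⟩ := exists_thread (t := fun _ => Set.univ)
      (fun _ => Set.infinite_univ) (fun _ => subset_rfl) f
    refine ⟨Set.range a, Set.infinite_range_of_injective ha.injective,
      fun i => (hE.false i).elim, fun n => ?_⟩
    rw [nth_range_strictMono ha]
    exact (haspec n).2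
  · obtain ⟨φ, hφ⟩ := exists_surjective_nat ι
    set t : ℕ → Set ℕ := fun n => ⋂ k ∈ Finset.range (n + 1), F (φ k) with ht_def
    have htsub : ∀ n k, k ≤ n → t n ⊆ F (φ k) := by
      intro n k hk
      exact Set.biInter_subset_of_mem (Finset.mem_range.mpr (Nat.lt_succ_of_le hk))
    have htmono' : ∀ k n, k ≤ n → t n ⊆ t k := by
      intro k n hkn m hm
      simp only [ht_def, Set.mem_iInter, Finset.mem_range] at hm ⊢
      intro j hj
      exact hm j (by omega)
    have htinf : ∀ n, (t n).Infinite := by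
      intro n
      set s : Finset ι := (Finset.range (n + 1)).image φ with hs
      have hsne : s.Nonempty := ⟨φ 0, Finset.mem_image_of_mem φ (by simp)⟩
      set i : ι := s.max' hsne with hi
      have hle : ∀ k, k ≤ n → φ k ≤ i :=
        fun k hk => Finset.le_max' s _ (Finset.mem_image_of_mem φ (by
          simpa using Nat.lt_succ_of_le hk))
      have hfin : (F i \ t n).Finite := by
        have hsub : F i \ t n ⊆ ⋃ k ∈ Finset.range (n + 1), (F i \ F (φ k)) := by
          intro m hm
          obtain ⟨hmi, hmt⟩ := hm
          simp only [ht_def, Set.mem_iInter, not_forall] at hmt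
          obtain ⟨k, hk, hknot⟩ := hmt
          exact Set.mem_biUnion hk ⟨hmi, hknot⟩
        refine Set.Finite.subset ?_ hsub
        refine Set.Finite.biUnion (Finset.range (n + 1)).finite_toSet ?_
        intro k hk
        have hk' : k ≤ n := by
          simp only [Finset.coe_range, Set.mem_Iio] at hk
          omega
        rcases lt_or_eq_of_le (hle k hk') with h | h
        · exact hchain _ _ h
        · rw [h]; simpa using Set.finite_empty
      have hinf2 : (F i \ (F i \ t n)).Infinite := (hinf i).diff hfin
      exact hinf2.mono (fun m hm => by
        obtain ⟨hmi, hmn⟩ := hm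
        by_contra hmt
        exact hmn ⟨hmi, hmt⟩)
    have htmono : ∀ n, t (n + 1) ⊆ t n := fun n => htmono' n (n + 1) (Nat.le_succ n)
    obtain ⟨a, ha, haspec⟩ := exists_thread htinf htmono f
    refine ⟨Set.range a, Set.infinite_range_of_injective ha.injective, ?_, fun n => ?_⟩
    · intro i
      obtain ⟨k, rfl⟩ := hφ i
      have : Set.range a \ F (φ k) ⊆ a '' (Set.Iio k) := by
        rintro m ⟨⟨n, rfl⟩, hnot⟩
        refine ⟨n, ?_, rfl⟩
        by_contra hn
        have hn' : k ≤ n := by simpa [Set.mem_Iio, not_lt] using hn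
        exact hnot (htsub k k le_rfl (htmono' k n hn' (haspec n).1))
      exact Set.Finite.subset ((Set.finite_Iio k).image a) this
    · rw [nth_range_strictMono ha]
      exact (haspec n).2

lemma omega1_lt_wf : WellFounded ((· < ·) : Omega1 → Omega1 → Prop) :=
  Subrelation.wf (fun {a b} h => Subtype.coe_lt_coe.mpr h)
    (InvImage.wf Subtype.val Ordinal.lt_wf)

lemma aleph_one_eq : Cardinal.aleph 1 = Order.succ Cardinal.aleph0 := by
  rw [← Ordinal.succ_zero, Cardinal.aleph_succ, Cardinal.aleph_zero]

lemma countable_below (α : Omega1) : Countable {β : Omega1 // β < α} := by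
  have h1 : α.val.card < Cardinal.aleph 1 := Cardinal.lt_ord.mp α.2
  have h1' : α.val.card ≤ Cardinal.aleph0 := by
    exact Order.lt_succ_iff.mp (h1.trans_eq aleph_one_eq)
  have h2 : Countable (Set.Iio α.val) := by
    rw [← Cardinal.mk_le_aleph0_iff, Ordinal.mk_Iio_ordinal]
    calc Cardinal.lift.{1} α.val.card ≤ Cardinal.lift.{1} Cardinal.aleph0 :=
          Cardinal.lift_le.mpr h1'
      _ = Cardinal.aleph0 := Cardinal.lift_aleph0
  have hinj : Function.Injective
      (fun b : {β : Omega1 // β < α} => (⟨b.1.1, Subtype.coe_lt_coe.mpr b.2⟩ : Set.Iio α.val)) := by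
    intro b c h
    simp only [Subtype.mk.injEq] at h
    have h' := congrArg Subtype.val h
    exact Subtype.ext (Subtype.ext h')
  exact hinj.countable

open scoped Classical in
noncomputable def scaleStep (f : Omega1 → ℕ → ℕ) (α : Omega1)
    (prior : ∀ β : Omega1, β < α → Set ℕ) : Set ℕ :=
  if h : ∃ y : Set ℕ, y.Infinite ∧ (∀ β (hβ : β < α), (y \ prior β hβ).Finite) ∧
      ∀ n, f α n ≤ Nat.nth (· ∈ y) n then h.choose else ∅

noncomputable def scale (f : Omega1 → ℕ → ℕ) : Omega1 → Set ℕ :=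
  omega1_lt_wf.fix (scaleStep f)

lemma scale_spec (f : Omega1 → ℕ → ℕ) (α : Omega1) :
    (scale f α).Infinite ∧ (∀ β, β < α → (scale f α \ scale f β).Finite) ∧
      ∀ n, f α n ≤ Nat.nth (· ∈ scale f α) n := by
  refine omega1_lt_wf.induction (C := fun γ => (scale f γ).Infinite ∧
    (∀ β, β < γ → (scale f γ \ scale f β).Finite) ∧
    ∀ n, f γ n ≤ Nat.nth (· ∈ scale f γ) n) α ?_
  clear α
  intro α IH
  have hex : ∃ y : Set ℕ, y.Infinite ∧ (∀ β (hβ : β < α), (y \ scale f β).Finite) ∧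
      ∀ n, f α n ≤ Nat.nth (· ∈ y) n := by
    have : Countable {β : Omega1 // β < α} := countable_below α
    obtain ⟨y, h1, h2, h3⟩ := key_exists (ι := {β : Omega1 // β < α})
      (fun b => scale f b.1) (fun b => (IH b.1 b.2).1)
      (fun i j hij => (IH j.1 j.2).2.1 i.1 (Subtype.coe_lt_coe.mpr hij)) (f α)
    exact ⟨y, h1, fun β hβ => h2 ⟨β, hβ⟩, h3⟩
  have hfix : scale f α = scaleStep f α (fun β _ => scale f β) :=
    WellFounded.fix_eq omega1_lt_wf (scaleStep f) α
  rw [hfix]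
  unfold scaleStep
  rw [dif_pos hex]
  exact ⟨hex.choose_spec.1, fun β hβ => hex.choose_spec.2.1 β hβ, hex.choose_spec.2.2⟩

/-- If `𝔟 = ℵ₁` (there is an unbounded family of size `ℵ₁`), then there is an unbounded
`⊆*`-decreasing `ω₁`-scale of infinite subsets of `ω`. -/
theorem exists_unbounded_subset_decreasing_scale
    (hb : ∃ B : Set (ℕ → ℕ), #B = aleph 1 ∧ UnboundedFamily B) :
    ∃ x : Omega1 → Set ℕ, (∀ α, (x α).Infinite) ∧
      (¬ ∃ g : ℕ → ℕ, ∀ α : Omega1,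
        ∀ᶠ n in Filter.atTop, Nat.nth (· ∈ x α) n ≤ g n) ∧
      (∀ α β : Omega1, α < β → (x β \ x α).Finite) := by
  obtain ⟨B, hBcard, hUnb⟩ := hb
  have hequiv : Nonempty (Omega1 ≃ ↥B) := by
    rw [← Cardinal.lift_mk_eq']
    have h0 : #Omega1 = #(Set.Iio ((Cardinal.aleph 1).ord)) := rfl
    rw [h0, Ordinal.mk_Iio_ordinal, Cardinal.card_ord, hBcard]
    simp
  obtain ⟨e⟩ := hequiv
  set f : Omega1 → ℕ → ℕ := fun α => (e α : ℕ → ℕ) with hf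
  refine ⟨scale f, fun α => (scale_spec f α).1, ?_, fun α β h => (scale_spec f β).2.1 α h⟩
  rintro ⟨g, hg⟩
  apply hUnb
  refine ⟨g, fun fb hfb => ?_⟩
  have hfa : f (e.symm ⟨fb, hfb⟩) = fb := by simp [hf]
  have hev := (hg (e.symm ⟨fb, hfb⟩)).mono
    (fun n hn => le_trans ((scale_spec f _).2.2 n) hn)
  rwa [hfa] at hev
end

section
/- If X is a Hausdorff space such that X^ω (countable power) is Menger, then X is compact. -/
/-- `X` is Menger: for every sequence of open covers there are finite subfamilies
whose unions form a cover. -/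
def MengerSpace (X : Type*) [TopologicalSpace X] : Prop :=
  ∀ 𝒰 : ℕ → Set (Set X),
    (∀ n, ∀ S ∈ 𝒰 n, IsOpen S) → (∀ n, ⋃₀ 𝒰 n = Set.univ) →
    ∃ F : ℕ → Set (Set X), (∀ n, F n ⊆ 𝒰 n ∧ (F n).Finite) ∧
      ∀ x : X, ∃ n, x ∈ ⋃₀ F n

/-- If the countable power of a Hausdorff space is Menger, the space is compact. -/
theorem compact_of_menger_omega_power {X : Type*} [TopologicalSpace X] [T2Space X]
    (hX : MengerSpace (ℕ → X)) : CompactSpace X := by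
  classical
  rw [← isCompact_univ_iff]
  apply isCompact_of_finite_subcover
  intro ι U hU hcov
  by_contra hfin
  push_neg at hfin
  -- X is nonempty, hence ι is nonempty
  obtain ⟨x₀, -, hx₀⟩ := Set.not_subset.mp (hfin ∅)
  obtain ⟨i₀, -⟩ := Set.mem_iUnion.mp (hcov (Set.mem_univ x₀))
  haveI : Nonempty ι := ⟨i₀⟩
  -- the covers of X^ω: pullbacks of U along each projection
  set 𝒰 : ℕ → Set (Set (ℕ → X)) :=
    fun n => Set.range (fun i : ι => (fun f : ℕ → X => f n) ⁻¹' U i) with h𝒰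
  obtain ⟨F, hF, hcovF⟩ := hX 𝒰
    (by
      rintro n S ⟨i, rfl⟩
      exact (hU i).preimage (continuous_apply n))
    (by
      intro n
      ext f
      simp only [Set.mem_univ, iff_true, Set.mem_sUnion]
      obtain ⟨i, hi⟩ := Set.mem_iUnion.mp (hcov (Set.mem_univ (f n)))
      exact ⟨_, ⟨i, rfl⟩, hi⟩)
  -- choose a witness index for each member of F n
  have pickex : ∀ n, ∀ S ∈ F n, ∃ i : ι, S = (fun f : ℕ → X => f n) ⁻¹' U i := by
    intro n S hS
    obtain ⟨i, hi⟩ := (hF n).1 hS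
    exact ⟨i, hi.symm⟩
  let pk : ℕ → Set (ℕ → X) → ι := fun n S =>
    if h : ∃ i : ι, S = (fun f : ℕ → X => f n) ⁻¹' U i then h.choose
    else Classical.arbitrary ι
  have pk_spec : ∀ n, ∀ S ∈ F n, S = (fun f : ℕ → X => f n) ⁻¹' U (pk n S) := by
    intro n S hS
    have h := pickex n S hS
    simp only [pk, dif_pos h]
    exact h.choose_spec
  -- finite index sets
  let t : ℕ → Finset ι := fun n => ((hF n).2.image (pk n)).toFinset
  -- for each n, t n does not cover, choose an uncovered point
  have hpt : ∀ n, ∃ y : X, y ∉ ⋃ i ∈ t n, U i := by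
    intro n
    obtain ⟨y, -, hy⟩ := Set.not_subset.mp (hfin (t n))
    exact ⟨y, hy⟩
  choose x hx using hpt
  obtain ⟨n, S, hS, hxS⟩ := hcovF x
  have h1 : x ∈ (fun f : ℕ → X => f n) ⁻¹' U (pk n S) := by
    rw [← pk_spec n S hS]; exact hxS
  have h2 : pk n S ∈ t n := by
    simp only [t, Set.Finite.mem_toFinset]
    exact Set.mem_image_of_mem _ hS
  exact hx n (Set.mem_biUnion h2 h1)
end
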